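/- (Corollary: constant angle) Let S ⊆ D be any set, ε ∈ {−1,1}, and N_L : S → ℝ³ a map such that at every p ∈ S one has g_L(p)(N_L(p), N_L(p)) = ε and g_L(p)(N_L(p), ξ) ≤ 0; define ω_L(p) = √(ε + 2 g_L(p)(N_L(p), ξ)²) and N_R(p) = (1/ω_L(p))(√(2(ω_L(p)² − ε)) ξ − N_L(p)). Then the function p ↦ g_L(p)(N_L(p), ξ) is constant on S if and only if the function p ↦ g_R(p)(N_R(p), ξ) is constant on S. -/
import Mathlib


noncomputable section

open Real

/-- Points/vectors of `ℝ³`. -/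
abbrev V3 : Type := ℝ × ℝ × ℝ

/-- The domain `D`: all of `ℝ³` if `κ ≥ 0`, the solid cylinder
`{x² + y² < -4/κ}` if `κ < 0`. -/
def Dset (κ : ℝ) : Set V3 := {p | κ < 0 → p.1 ^ 2 + p.2.1 ^ 2 < -4 / κ}

/-- The conformal factor `λ`. -/
def lam (κ : ℝ) (p : V3) : ℝ := 1 / (1 + κ / 4 * (p.1 ^ 2 + p.2.1 ^ 2))

/-- The Riemannian BCV metric `g_R` at the point `p`, evaluated on vectors `u, v`. -/
def gR (κ τ : ℝ) (p u v : V3) : ℝ :=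
  (lam κ p) ^ 2 * (u.1 * v.1 + u.2.1 * v.2.1) +
    (u.2.2 + τ * lam κ p * (p.2.1 * u.1 - p.1 * u.2.1)) *
      (v.2.2 + τ * lam κ p * (p.2.1 * v.1 - p.1 * v.2.1))

/-- The Lorentzian BCV metric `g_L` at the point `p`, evaluated on vectors `u, v`. -/
def gL (κ τ : ℝ) (p u v : V3) : ℝ :=
  (lam κ p) ^ 2 * (u.1 * v.1 + u.2.1 * v.2.1) -
    (u.2.2 + τ * lam κ p * (p.2.1 * u.1 - p.1 * u.2.1)) *
      (v.2.2 + τ * lam κ p * (p.2.1 * v.1 - p.1 * v.2.1))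

/-- The frame field `E₁` (with `σ = κ/(2τ)`). -/
def E1 (κ τ : ℝ) (p : V3) : V3 :=
  ((lam κ p)⁻¹ * cos (κ / (2 * τ) * p.2.2),
   (lam κ p)⁻¹ * sin (κ / (2 * τ) * p.2.2),
   τ * (p.1 * sin (κ / (2 * τ) * p.2.2) - p.2.1 * cos (κ / (2 * τ) * p.2.2)))

/-- The frame field `E₂` (with `σ = κ/(2τ)`). -/
def E2 (κ τ : ℝ) (p : V3) : V3 :=
  (-((lam κ p)⁻¹ * sin (κ / (2 * τ) * p.2.2)),
   (lam κ p)⁻¹ * cos (κ / (2 * τ) * p.2.2),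
   τ * (p.1 * cos (κ / (2 * τ) * p.2.2) + p.2.1 * sin (κ / (2 * τ) * p.2.2)))

/-- The (constant) frame field `E₃ = ∂_z`. -/
def E3 : V3 := (0, 0, 1)

/-- The Killing field `ξ = E₃`. -/
def xi : V3 := E3

/-- First coefficient of a vector in the frame `{E₁,E₂,E₃}` (extracted with `g_R`;
the frame is `g_R`-orthonormal on `D`). -/
def c1 (κ τ : ℝ) (p : V3) (u : V3) : ℝ := gR κ τ p u (E1 κ τ p)

/-- Second frame coefficient. -/
def c2 (κ τ : ℝ) (p : V3) (u : V3) : ℝ := gR κ τ p u (E2 κ τ p)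

/-- Third frame coefficient. -/
def c3 (κ τ : ℝ) (p : V3) (u : V3) : ℝ := gR κ τ p u E3

/-- The Riemannian cross product `u ∧_R v` at `p`. -/
def wedgeR (κ τ : ℝ) (p : V3) (u v : V3) : V3 :=
  (c2 κ τ p u * c3 κ τ p v - c3 κ τ p u * c2 κ τ p v) • E1 κ τ p
    - (c1 κ τ p u * c3 κ τ p v - c3 κ τ p u * c1 κ τ p v) • E2 κ τ p
    + (c1 κ τ p u * c2 κ τ p v - c2 κ τ p u * c1 κ τ p v) • E3

/-- The Lorentzian cross product `u ∧_L v` at `p`. -/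
def wedgeL (κ τ : ℝ) (p : V3) (u v : V3) : V3 :=
  (c2 κ τ p u * c3 κ τ p v - c3 κ τ p u * c2 κ τ p v) • E1 κ τ p
    - (c1 κ τ p u * c3 κ τ p v - c3 κ τ p u * c1 κ τ p v) • E2 κ τ p
    - (c1 κ τ p u * c2 κ τ p v - c2 κ τ p u * c1 κ τ p v) • E3

/-- The Lie bracket of vector fields on (an open subset of) `ℝ³`:
`[X,Y](p) = DY(p)(X(p)) − DX(p)(Y(p))`. -/
def lie (X Y : V3 → V3) (p : V3) : V3 :=
  fderiv ℝ Y p (X p) - fderiv ℝ X p (Y p)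

/-- The explicit connection `∇ᴿ` of `𝔼³(κ,τ)`. -/
def nablaR (κ τ : ℝ) (X Y : V3 → V3) (p : V3) : V3 :=
  (fderiv ℝ (fun q => c1 κ τ q (Y q)) p (X p)) • E1 κ τ p
    + (fderiv ℝ (fun q => c2 κ τ q (Y q)) p (X p)) • E2 κ τ p
    + (fderiv ℝ (fun q => c3 κ τ q (Y q)) p (X p)) • E3
    + (τ * c2 κ τ p (X p) * c3 κ τ p (Y p)) • E1 κ τ p
    - (τ * c1 κ τ p (X p) * c3 κ τ p (Y p)) • E2 κ τ p
    + (τ * (c1 κ τ p (X p) * c2 κ τ p (Y p) - c2 κ τ p (X p) * c1 κ τ p (Y p))) • E3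
    + ((κ - 2 * τ ^ 2) / (2 * τ) * (c3 κ τ p (X p) * c1 κ τ p (Y p))) • E2 κ τ p
    - ((κ - 2 * τ ^ 2) / (2 * τ) * (c3 κ τ p (X p) * c2 κ τ p (Y p))) • E1 κ τ p

/-- The explicit connection `∇ᴸ` of `𝕃³(κ,τ)`. -/
def nablaL (κ τ : ℝ) (X Y : V3 → V3) (p : V3) : V3 :=
  (fderiv ℝ (fun q => c1 κ τ q (Y q)) p (X p)) • E1 κ τ p
    + (fderiv ℝ (fun q => c2 κ τ q (Y q)) p (X p)) • E2 κ τ p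
    + (fderiv ℝ (fun q => c3 κ τ q (Y q)) p (X p)) • E3
    - (τ * c2 κ τ p (X p) * c3 κ τ p (Y p)) • E1 κ τ p
    + (τ * c1 κ τ p (X p) * c3 κ τ p (Y p)) • E2 κ τ p
    + (τ * (c1 κ τ p (X p) * c2 κ τ p (Y p) - c2 κ τ p (X p) * c1 κ τ p (Y p))) • E3
    + ((κ + 2 * τ ^ 2) / (2 * τ) * (c3 κ τ p (X p) * c1 κ τ p (Y p))) • E2 κ τ p
    - ((κ + 2 * τ ^ 2) / (2 * τ) * (c3 κ τ p (X p) * c2 κ τ p (Y p))) • E1 κ τ p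

/-- `ω_L = √(ε + 2 g_L(N, ξ)²)`. -/
def omegaL (κ τ ε : ℝ) (p : V3) (N : V3) : ℝ :=
  Real.sqrt (ε + 2 * (gL κ τ p N xi) ^ 2)

/-- `ω_R = 1/ω_L`. -/
def omegaR (κ τ ε : ℝ) (p : V3) (N : V3) : ℝ := 1 / omegaL κ τ ε p N

/-- The Riemannian unit normal `N_R = (1/ω_L)(√(2(ω_L² − ε)) ξ − N_L)`. -/
def NRof (κ τ ε : ℝ) (p : V3) (N : V3) : V3 :=
  (1 / omegaL κ τ ε p N) • (Real.sqrt (2 * ((omegaL κ τ ε p N) ^ 2 - ε)) • xi - N)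

/-- `g_L(p)(n, ·)` as a linear form. -/
def gLlin (κ τ : ℝ) (p n : V3) : V3 →ₗ[ℝ] ℝ where
  toFun v := gL κ τ p n v
  map_add' v w := by
    simp only [gL, Prod.fst_add, Prod.snd_add]
    ring
  map_smul' r v := by
    simp only [gL, Prod.smul_fst, Prod.smul_snd, smul_eq_mul, RingHom.id_apply]
    ring

/-- The tangent plane at `p` determined by the normal `n`:
`P_p = {v : g_L(n,v) = 0}`. -/
def Pp (κ τ : ℝ) (p n : V3) : Submodule ℝ V3 := LinearMap.ker (gLlin κ τ p n)

/-- The Lorentzian shape operator `A_L v = −∇ᴸ_v N_L`. -/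
def AL (κ τ : ℝ) (NL : V3 → V3) (p : V3) (v : V3) : V3 :=
  -(nablaL κ τ (fun _ => v) NL p)

/-- The Riemannian shape operator `A_R v = −∇ᴿ_v N_R`. -/
def AR (κ τ ε : ℝ) (NL : V3 → V3) (p : V3) (v : V3) : V3 :=
  -(nablaR κ τ (fun _ => v) (fun q => NRof κ τ ε q (NL q)) p)

/-- The tangential part `T_L = ξ − ε g_L(N_L, ξ) N_L`. -/
def TLof (κ τ ε : ℝ) (p : V3) (N : V3) : V3 := xi - (ε * gL κ τ p N xi) • N

/-- The tangential part `T_R = ξ − g_R(N_R, ξ) N_R`. -/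
def TRof (κ τ ε : ℝ) (p : V3) (N : V3) : V3 :=
  xi - (gR κ τ p (NRof κ τ ε p N) xi) • NRof κ τ ε p N

/-- The rotation `J_L v = N_L ∧_L v`. -/
def JL (κ τ : ℝ) (p : V3) (N : V3) (v : V3) : V3 := wedgeL κ τ p N v

/-- The rotation `J_R v = N_R ∧_R v`. -/
def JR (κ τ : ℝ) (p : V3) (N : V3) (v : V3) : V3 := wedgeR κ τ p N v

lemma nu_sq_ge (κ τ ε : ℝ) (hε : ε = -1 ∨ ε = 1) (p N : V3) (h : gL κ τ p N N = ε) :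
    1 ≤ ε + 2 * (gL κ τ p N xi) ^ 2 := by
  simp only [gL, xi, E3] at h ⊢
  rcases hε with h1 | h1 <;> subst h1 <;>
    nlinarith [sq_nonneg (lam κ p * N.1), sq_nonneg (lam κ p * N.2.1),
      sq_nonneg (N.2.2 + τ * lam κ p * (p.2.1 * N.1 - p.1 * N.2.1))]

lemma gR_NR_eq (κ τ ε : ℝ) (p N : V3) (hle : gL κ τ p N xi ≤ 0)
    (hge : 1 ≤ ε + 2 * (gL κ τ p N xi) ^ 2) :
    gR κ τ p (NRof κ τ ε p N) xi =
      - gL κ τ p N xi / Real.sqrt (ε + 2 * (gL κ τ p N xi) ^ 2) := by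
  set ν := gL κ τ p N xi with hν
  have hpos : (0:ℝ) < ε + 2 * ν ^ 2 := by linarith
  have hω : (Real.sqrt (ε + 2 * ν ^ 2)) ^ 2 = ε + 2 * ν ^ 2 := Real.sq_sqrt hpos.le
  have hω0 : (0:ℝ) < Real.sqrt (ε + 2 * ν ^ 2) := Real.sqrt_pos.mpr hpos
  have homega : omegaL κ τ ε p N = Real.sqrt (ε + 2 * ν ^ 2) := rfl
  have hs : Real.sqrt (2 * ((omegaL κ τ ε p N) ^ 2 - ε)) = -2 * ν := by
    rw [homega, hω]
    have h4 : 2 * (ε + 2 * ν ^ 2 - ε) = (-2 * ν) ^ 2 := by ring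
    rw [h4, Real.sqrt_sq (by linarith : (0:ℝ) ≤ -2 * ν)]
  have hw : N.2.2 + τ * lam κ p * (p.2.1 * N.1 - p.1 * N.2.1) = -ν := by
    simp only [hν, gL, xi, E3]; ring
  simp only [NRof, homega]
  rw [show omegaL κ τ ε p N = Real.sqrt (ε + 2 * ν ^ 2) from rfl] at hs
  rw [hs]
  simp only [gR, xi, E3, Prod.smul_fst, Prod.smul_snd, Prod.fst_sub, Prod.snd_sub,
    Prod.smul_def, smul_eq_mul]
  linear_combination (-1 / Real.sqrt (ε + 2 * ν ^ 2)) * hw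

lemma angle_inj (ε a b : ℝ) (hε : ε = -1 ∨ ε = 1) (ha : a ≤ 0) (hb : b ≤ 0)
    (ha1 : 1 ≤ ε + 2 * a ^ 2) (hb1 : 1 ≤ ε + 2 * b ^ 2)
    (h : -a / Real.sqrt (ε + 2 * a ^ 2) = -b / Real.sqrt (ε + 2 * b ^ 2)) : a = b := by
  have hA : (0:ℝ) < ε + 2 * a ^ 2 := by linarith
  have hB : (0:ℝ) < ε + 2 * b ^ 2 := by linarith
  set sa := Real.sqrt (ε + 2 * a ^ 2) with hsa'
  set sb := Real.sqrt (ε + 2 * b ^ 2) with hsb'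
  have hsa : sa ^ 2 = ε + 2 * a ^ 2 := Real.sq_sqrt hA.le
  have hsb : sb ^ 2 = ε + 2 * b ^ 2 := Real.sq_sqrt hB.le
  have hsa0 : 0 < sa := Real.sqrt_pos.mpr hA
  have hsb0 : 0 < sb := Real.sqrt_pos.mpr hB
  rw [div_eq_div_iff hsa0.ne' hsb0.ne'] at h
  have h2 : a ^ 2 * (ε + 2 * b ^ 2) = b ^ 2 * (ε + 2 * a ^ 2) := by
    linear_combination (-a * sb - b * sa) * h - a ^ 2 * hsb + b ^ 2 * hsa
  have h3 : a ^ 2 = b ^ 2 := by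
    rcases hε with h1 | h1 <;> subst h1 <;> [linear_combination -h2; linear_combination h2]
  have h4 : Real.sqrt (a ^ 2) = Real.sqrt (b ^ 2) := by rw [h3]
  rwa [Real.sqrt_sq_eq_abs, Real.sqrt_sq_eq_abs, abs_of_nonpos ha, abs_of_nonpos hb,
    neg_inj] at h4

/-- constant angle: `g_L(N_L, ξ)` is constant on `S` iff
`g_R(N_R, ξ)` is constant on `S`. -/
theorem constant_angle (κ τ : ℝ) (hτ : τ ≠ 0) (ε : ℝ) (hε : ε = -1 ∨ ε = 1)
    (S : Set V3) (hS : S ⊆ Dset κ) (NL : V3 → V3)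
    (hNL : ∀ p ∈ S, gL κ τ p (NL p) (NL p) = ε)
    (hle : ∀ p ∈ S, gL κ τ p (NL p) xi ≤ 0) :
    (∃ c : ℝ, ∀ p ∈ S, gL κ τ p (NL p) xi = c) ↔
      (∃ c : ℝ, ∀ p ∈ S, gR κ τ p (NRof κ τ ε p (NL p)) xi = c) := by
  have key : ∀ p ∈ S, gR κ τ p (NRof κ τ ε p (NL p)) xi =
      - gL κ τ p (NL p) xi / Real.sqrt (ε + 2 * (gL κ τ p (NL p) xi) ^ 2) :=
    fun p hp => gR_NR_eq κ τ ε p (NL p) (hle p hp)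
      (nu_sq_ge κ τ ε hε p (NL p) (hNL p hp))
  constructor
  · rintro ⟨c, hc⟩
    exact ⟨-c / Real.sqrt (ε + 2 * c ^ 2), fun p hp => by rw [key p hp, hc p hp]⟩
  · rintro ⟨d, hd⟩
    rcases S.eq_empty_or_nonempty with rfl | ⟨p₀, hp₀⟩
    · exact ⟨0, by simp⟩
    · refine ⟨gL κ τ p₀ (NL p₀) xi, fun p hp => ?_⟩
      refine angle_inj ε _ _ hε (hle p hp) (hle p₀ hp₀)
        (nu_sq_ge κ τ ε hε p (NL p) (hNL p hp))
        (nu_sq_ge κ τ ε hε p₀ (NL p₀) (hNL p₀ hp₀)) ?_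
      rw [← key p hp, ← key p₀ hp₀, hd p hp, hd p₀ hp₀]

end
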